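/- (Dominance-based strengthening rule.) Let (𝒞, 𝒟, g, z, T, ε) be an (F, f)-valid configuration and let C ⊆ ℝ^n. Suppose there exists a witness ω : ℝ^n → ℝ^n such that for all x ∈ ℝ^n: if x ∈ ⋂(𝒞 ∪ 𝒟) and x ∉ C, then ω(x) ∈ ⋂𝒞, ω(x) ≻_{ε,T} x, and g(ω(x)) ≤ g(x). Then (𝒞, 𝒟 ∪ {C}, g, z, T, ε) is also (F, f)-valid. -/

import Mathlib

open Set

/-- Apply a signed index list (index, sign) to a point, giving the vector
`(sign(i₁)·x_{|i₁|}, …, sign(i_k)·x_{|i_k|})` as a list of reals.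
`true` encodes a positive sign, `false` a negative sign. -/
def sigApply {n : ℕ} (σ : List (Fin n × Bool)) (x : Fin n → ℝ) : List ℝ :=
  σ.map (fun p => if p.2 then x p.1 else -(x p.1))

/-- Strict ε-lexicographic order `x ≻_ε y` on lists of reals:
`x ≠ y` and, at the first index where they differ, `x i ≥ y i + ε`. -/
def lexGt (ε : ℝ) : List ℝ → List ℝ → Prop
  | a :: as, b :: bs => (a = b ∧ lexGt ε as bs) ∨ (a ≠ b ∧ b + ε ≤ a)
  | _, _ => False

/-- A branching tree `T = (V, E, B, σ)`: a finite arborescence (encoded by a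
parent map from which every node reaches the root), a branching constraint
`B v ⊆ ℝⁿ` for every node with `B r = ℝⁿ`, and a list `σ v` of signed variable
indices with pairwise distinct absolute values for every node. -/
structure BranchingTree (n : ℕ) where
  V : Type
  fin : Fintype V
  root : V
  parent : V → Option V
  parent_root : parent root = none
  parent_isSome : ∀ v, v ≠ root → (parent v).isSome
  reach_root : ∀ v, Relation.ReflTransGen (fun a b => parent a = some b) v root
  B : V → Set (Fin n → ℝ)
  B_root : B root = Set.univ
  sig : V → List (Fin n × Bool)
  sig_nodup : ∀ v, ((sig v).map Prod.fst).Nodup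

namespace BranchingTree

variable {n : ℕ} (T : BranchingTree n)

/-- The set of children `δ⁺(u)` of a node. -/
def children (u : T.V) : Set T.V := {v | T.parent v = some u}

/-- A leaf is a node without children. -/
def IsLeaf (v : T.V) : Prop := T.children v = ∅

/-- The nodes on the root-to-`v` path (the ancestors of `v`, including `v`). -/
def pathNodes (v : T.V) : Set T.V :=
  {u | Relation.ReflTransGen (fun a b => T.parent a = some b) v u}

/-- `ℬ_v`: the branching constraints attached to the nodes on the root-to-`v` path. -/
def pathCons (v : T.V) : Set (Set (Fin n → ℝ)) := T.B '' T.pathNodes v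

/-- Depth of a node: the number of nodes on its root path. -/
noncomputable def depth (v : T.V) : ℕ := (T.pathNodes v).ncard

/-- The feasible region `⋂(𝒞 ∪ ℬ_v)` of node `v`. -/
def region (𝒞 : Set (Set (Fin n → ℝ))) (v : T.V) : Set (Fin n → ℝ) :=
  ⋂₀ (𝒞 ∪ T.pathCons v)

/-- `T` is `𝒞`-consistent: (T3) the children of any non-leaf cover `⋂𝒞`;
(T5) `σ u` is a prefix of `σ v` for every child `v` of `u`;
(T6) every entry of `σ v (x)` is bounded above over `x ∈ ⋂𝒞`;
(T7) distinct children of `u` have `σ u`-disjoint branching constraints. -/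
def Consistent (𝒞 : Set (Set (Fin n → ℝ))) : Prop :=
  (∀ u : T.V, (T.children u).Nonempty → ⋂₀ 𝒞 ⊆ ⋃ v ∈ T.children u, T.B v) ∧
  (∀ u v : T.V, v ∈ T.children u → T.sig u <+: T.sig v) ∧
  (∀ v : T.V, ∀ i : Fin (T.sig v).length,
    BddAbove ((fun x => if ((T.sig v).get i).2 then x ((T.sig v).get i).1
      else -(x ((T.sig v).get i).1)) '' ⋂₀ 𝒞)) ∧
  (∀ u v w : T.V, v ∈ T.children u → w ∈ T.children u → v ≠ w →
    sigApply (T.sig u) '' T.B v ∩ sigApply (T.sig u) '' T.B w = ∅)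

/-- `v` is a deepest common node `dcn(x,y)`: both `x` and `y` lie in the
feasible region of `v`, and `v` is deepest with this property. -/
def IsDCN (𝒞 : Set (Set (Fin n → ℝ))) (v : T.V) (x y : Fin n → ℝ) : Prop :=
  x ∈ T.region 𝒞 v ∧ y ∈ T.region 𝒞 v ∧
  ∀ w : T.V, x ∈ T.region 𝒞 w → y ∈ T.region 𝒞 w → T.depth w ≤ T.depth v

/-- `x ⪰_T y` : with `v = dcn(x,y)`, `σ v (x) = σ v (y)` or `σ v (x) ≻_ε σ v (y)`. -/
def TreeGe (𝒞 : Set (Set (Fin n → ℝ))) (ε : ℝ) (x y : Fin n → ℝ) : Prop :=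
  ∃ v : T.V, T.IsDCN 𝒞 v x y ∧
    (sigApply (T.sig v) x = sigApply (T.sig v) y ∨
      lexGt ε (sigApply (T.sig v) x) (sigApply (T.sig v) y))

/-- `x ≻_{ε,T} y` : with `v = dcn(x,y)`, `σ v (x) ≻_ε σ v (y)`. -/
def TreeGt (𝒞 : Set (Set (Fin n → ℝ))) (ε : ℝ) (x y : Fin n → ℝ) : Prop :=
  ∃ v : T.V, T.IsDCN 𝒞 v x y ∧
    lexGt ε (sigApply (T.sig v) x) (sigApply (T.sig v) y)

end BranchingTree

/-- A configuration `(𝒞, 𝒟, g, z, T, ε)`. -/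
structure Config (n : ℕ) where
  core : Set (Set (Fin n → ℝ))
  derived : Set (Set (Fin n → ℝ))
  g : (Fin n → ℝ) → ℝ
  z : WithTop ℝ
  tree : BranchingTree n
  eps : ℝ

/-- `(F, f)`-validity of a configuration: (V1) the tree is core-consistent and
`ε > 0`; (V2) if `z < ∞` there is `x ∈ F` with `f x ≤ z`; (V3) for every real
`ẑ < z`, `F` contains a point of `f`-value `≤ ẑ` iff `⋂𝒞` contains a point of
`g`-value `≤ ẑ`; (V4) every `x ∈ ⋂𝒞` with `g x < z` is dominated by some
`y ∈ ⋂(𝒞 ∪ 𝒟)` with `y ⪰_T x` and `g y ≤ g x`. -/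
def Config.Valid {n : ℕ} (F : Set (Fin n → ℝ)) (f : (Fin n → ℝ) → ℝ)
    (K : Config n) : Prop :=
  (K.tree.Consistent K.core ∧ 0 < K.eps) ∧
  (K.z < ⊤ → ∃ x ∈ F, (f x : WithTop ℝ) ≤ K.z) ∧
  (∀ zh : ℝ, (zh : WithTop ℝ) < K.z →
    ((∃ x ∈ F, f x ≤ zh) ↔ ∃ x ∈ ⋂₀ K.core, K.g x ≤ zh)) ∧
  (∀ x ∈ ⋂₀ K.core, (K.g x : WithTop ℝ) < K.z →
    ∃ y ∈ ⋂₀ (K.core ∪ K.derived), K.tree.TreeGe K.core K.eps y x ∧ K.g y ≤ K.g x)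

/-- The implication constraint `[𝒜 ⇝ C] = (ℝⁿ \ ⋂𝒜) ∪ C`. -/
def implCon {n : ℕ} (𝒜 : Set (Set (Fin n → ℝ))) (C : Set (Fin n → ℝ)) :
    Set (Fin n → ℝ) := (⋂₀ 𝒜)ᶜ ∪ C

lemma lexGt_nil_left {ε : ℝ} {l : List ℝ} : ¬ lexGt ε [] l := by
  cases l <;> simp [lexGt]

lemma lexGt_nil_right {ε : ℝ} {l : List ℝ} : ¬ lexGt ε l [] := by
  cases l <;> simp [lexGt]

lemma lexGt_cons {ε : ℝ} {a b : ℝ} {as bs : List ℝ} :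
    lexGt ε (a :: as) (b :: bs) ↔ (a = b ∧ lexGt ε as bs) ∨ (a ≠ b ∧ b + ε ≤ a) := Iff.rfl

lemma lexGt_irrefl (ε : ℝ) : ∀ l : List ℝ, ¬ lexGt ε l l
  | [] => lexGt_nil_left
  | a :: l => by
      rw [lexGt_cons]
      rintro (⟨-, h⟩ | ⟨h, -⟩)
      · exact lexGt_irrefl ε l h
      · exact h rfl

lemma lexGt_ne {ε : ℝ} (hε : 0 < ε) : ∀ {a b : List ℝ}, lexGt ε a b → a ≠ b := by
  intro a b h heq; subst heq; exact lexGt_irrefl ε _ h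

lemma lexGt_trans {ε : ℝ} (hε : 0 < ε) :
    ∀ {a b c : List ℝ}, lexGt ε a b → lexGt ε b c → lexGt ε a c
  | a :: as, b :: bs, c :: cs, hab, hbc => by
      rw [lexGt_cons] at *
      rcases hab with ⟨hab, h1⟩ | ⟨hab, h1⟩ <;> rcases hbc with ⟨hbc, h2⟩ | ⟨hbc, h2⟩
      · exact Or.inl ⟨hab.trans hbc, lexGt_trans hε h1 h2⟩
      · exact Or.inr ⟨by rintro rfl; exact hbc (hab.symm), hab ▸ h2⟩
      · exact Or.inr ⟨fun hac => hab (hac.trans hbc.symm), hbc ▸ h1⟩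
      · refine Or.inr ⟨?_, ?_⟩
        · rintro rfl
          nlinarith
        · nlinarith
  | a :: as, b :: bs, [], hab, hbc => absurd hbc lexGt_nil_right
  | a :: as, [], c, hab, hbc => absurd hab lexGt_nil_right
  | [], b, c, hab, hbc => absurd hab lexGt_nil_left

lemma lexGt_append {ε : ℝ} :
    ∀ {p q : List ℝ}, lexGt ε p q → ∀ (s t : List ℝ), lexGt ε (p ++ s) (q ++ t)
  | a :: as, b :: bs, h, s, t => by
      rw [lexGt_cons] at h
      rcases h with ⟨hab, h⟩ | ⟨hab, h⟩
      · exact Or.inl ⟨hab, lexGt_append h s t⟩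
      · exact Or.inr ⟨hab, h⟩
  | a :: as, [], h, s, t => absurd h lexGt_nil_right
  | [], q, h, s, t => absurd h lexGt_nil_left

lemma lexGt_restrict {ε : ℝ} :
    ∀ {p q : List ℝ}, p.length = q.length → ∀ {s t : List ℝ},
      lexGt ε (p ++ s) (q ++ t) → p = q ∨ lexGt ε p q
  | [], [], _, s, t, _ => Or.inl rfl
  | a :: as, b :: bs, hlen, s, t, h => by
      rcases (lexGt_cons.1 h) with ⟨hab, h⟩ | ⟨hab, h⟩
      · rcases lexGt_restrict (by simpa using hlen) h with rfl | h'
        · exact Or.inl (by rw [hab])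
        · exact Or.inr (Or.inl ⟨hab, h'⟩)
      · exact Or.inr (Or.inr ⟨hab, h⟩)
  | [], b :: bs, hlen, _, _, _ => by simp at hlen
  | a :: as, [], hlen, _, _, _ => by simp at hlen

lemma head_escape {ε : ℝ} (hε : 0 < ε) (h : ℕ → ℝ)
    (hstep : ∀ k, h (k + 1) = h k ∨ h k + ε ≤ h (k + 1)) (M0 : ℝ)
    (hbd : ∀ k, h k ≤ M0) : ∃ k₀, ∀ k, k₀ ≤ k → h k = h k₀ := by
  by_contra hcon
  push_neg at hcon
  have mono : ∀ k l, k ≤ l → h k ≤ h l := by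
    intro k l hkl
    induction hkl with
    | refl => exact le_rfl
    | @step m hm ih =>
      rcases hstep m with he | he
      · rw [he]; exact ih
      · linarith
  have jump : ∀ k l, k ≤ l → h l ≠ h k → h k + ε ≤ h l := by
    intro k l hkl
    induction hkl with
    | refl => intro hne; exact absurd rfl hne
    | @step m hm ih =>
      intro hne
      rcases hstep m with he | he
      · rw [he]; exact ih (fun hh => hne (he.trans hh))
      · have := mono k m hm
        linarith
  have grow : ∀ j : ℕ, ∃ k, h 0 + j * ε ≤ h k := by
    intro j
    induction j with
    | zero => exact ⟨0, by simp⟩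
    | succ j ih =>
      obtain ⟨k, hk⟩ := ih
      obtain ⟨k', hkk', hne⟩ := hcon k
      have := jump k k' hkk' hne
      exact ⟨k', by push_cast; linarith⟩
  obtain ⟨j, hj⟩ := exists_nat_gt ((M0 - h 0) / ε)
  obtain ⟨k, hk⟩ := grow j
  have : (M0 - h 0) < j * ε := by
    rw [div_lt_iff₀ hε] at hj
    linarith
  have := hbd k
  linarith

lemma lexGt_bounded_chain {ε : ℝ} (hε : 0 < ε) :
    ∀ (M : List ℝ) (w : ℕ → List ℝ), (∀ k, List.Forall₂ (· ≤ ·) (w k) M) →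
      (∀ k, lexGt ε (w (k + 1)) (w k)) → False
  | [], w, hbd, hstep => by
      have h0 : w 0 = [] := List.forall₂_nil_right_iff.1 (hbd 0)
      have h1 : w 1 = [] := List.forall₂_nil_right_iff.1 (hbd 1)
      have := hstep 0
      rw [h0, h1] at this
      exact lexGt_nil_left this
  | M0 :: Ms, w, hbd, hstep => by
      have hd : ∀ k, ∃ a l, w k = a :: l ∧ a ≤ M0 ∧ List.Forall₂ (· ≤ ·) l Ms := by
        intro k
        rcases List.forall₂_cons_right_iff.1 (hbd k) with ⟨a, l, h1, h2, h3⟩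
        exact ⟨a, l, h3, h1, h2⟩
      choose A L hAL hA hL using hd
      have hstep' : ∀ k, lexGt ε (A (k+1) :: L (k+1)) (A k :: L k) := by
        intro k; have := hstep k; rwa [hAL, hAL] at this
      have headstep : ∀ k, A (k+1) = A k ∨ A k + ε ≤ A (k+1) := by
        intro k
        rcases lexGt_cons.1 (hstep' k) with ⟨he, -⟩ | ⟨-, hle⟩
        · exact Or.inl he
        · exact Or.inr hle
      obtain ⟨k₀, hk₀⟩ := head_escape hε A headstep M0 hA
      have tailchain : ∀ k, lexGt ε (L (k₀ + k + 1)) (L (k₀ + k)) := by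
        intro k
        rcases lexGt_cons.1 (hstep' (k₀ + k)) with ⟨-, hl⟩ | ⟨hne, -⟩
        · exact hl
        · exact absurd ((hk₀ (k₀ + k + 1) (by omega)).trans (hk₀ (k₀ + k) (by omega)).symm) hne
      exact lexGt_bounded_chain hε Ms (fun k => L (k₀ + k)) (fun k => hL _)
        (fun k => by have := tailchain k; rwa [Nat.add_assoc] at this)


section TreeAux

open Relation

namespace BranchingTree

variable {n : ℕ} (T : BranchingTree n)

/-- Parent function, fixing the root. -/
def pf : T.V → T.V := fun v => (T.parent v).getD v

variable {T}

lemma pf_root : T.pf T.root = T.root := by simp [pf, T.parent_root]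

lemma root_of_parent_none {v : T.V} (h : T.parent v = none) : v = T.root := by
  by_contra hv
  have := T.parent_isSome v hv
  rw [h] at this
  simp at this

lemma parent_pf {v : T.V} (hv : v ≠ T.root) : T.parent v = some (T.pf v) := by
  have := T.parent_isSome v hv
  rcases Option.isSome_iff_exists.1 this with ⟨b, hb⟩
  simp [pf, hb]

lemma pf_eq_of_parent {a b : T.V} (h : T.parent a = some b) : T.pf a = b := by
  simp [pf, h]

lemma ne_root_of_parent {a b : T.V} (h : T.parent a = some b) : a ≠ T.root := by
  rintro rfl
  rw [T.parent_root] at h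
  cases h

lemma mem_pathNodes_iff {u v : T.V} : u ∈ T.pathNodes v ↔ ∃ k, T.pf^[k] v = u := by
  constructor
  · intro h
    induction h with
    | refl => exact ⟨0, rfl⟩
    | tail h1 h2 ih =>
      obtain ⟨k, hk⟩ := ih
      exact ⟨k + 1, by rw [Function.iterate_succ_apply', hk, pf_eq_of_parent h2]⟩
  · rintro ⟨k, rfl⟩
    induction k with
    | zero => exact ReflTransGen.refl
    | succ k ih =>
      rw [Function.iterate_succ_apply']
      by_cases hc : T.pf^[k] v = T.root
      · rw [hc, pf_root, ← hc]
        exact ih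
      · exact ReflTransGen.tail ih (parent_pf hc)

lemma pf_iterate_root : ∀ k, T.pf^[k] T.root = T.root := by
  intro k
  induction k with
  | zero => rfl
  | succ k ih => rw [Function.iterate_succ_apply', ih, pf_root]

lemma exists_iterate_root (v : T.V) : ∃ k, T.pf^[k] v = T.root :=
  mem_pathNodes_iff.1 (T.reach_root v)

lemma iterate_root_of_le {v : T.V} {k j : ℕ} (hk : T.pf^[k] v = T.root) (hkj : k ≤ j) :
    T.pf^[j] v = T.root := by
  obtain ⟨m, rfl⟩ := Nat.exists_eq_add_of_le hkj
  rw [Nat.add_comm, Function.iterate_add_apply, hk, pf_iterate_root]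

lemma mem_pathNodes_self (v : T.V) : v ∈ T.pathNodes v := ReflTransGen.refl

lemma root_mem_pathNodes (v : T.V) : T.root ∈ T.pathNodes v := T.reach_root v

lemma pathNodes_subset {u v : T.V} (h : u ∈ T.pathNodes v) : T.pathNodes u ⊆ T.pathNodes v :=
  fun _ hw => ReflTransGen.trans (h : ReflTransGen _ v u) hw

lemma pathNodes_antisymm {u v : T.V} (huv : u ∈ T.pathNodes v) (hvu : v ∈ T.pathNodes u) :
    u = v := by
  obtain ⟨k, hk⟩ := mem_pathNodes_iff.1 huv
  obtain ⟨m, hm⟩ := mem_pathNodes_iff.1 hvu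
  have hcyc : T.pf^[m + k] v = v := by
    rw [Function.iterate_add_apply, hk, hm]
  rcases Nat.eq_zero_or_pos (m + k) with h0 | hpos
  · have hk0 : k = 0 := by omega
    rw [hk0] at hk
    exact hk.symm ▸ rfl
  · have hN : ∀ N, T.pf^[(m + k) * N] v = v := by
      intro N
      induction N with
      | zero => rfl
      | succ N ih =>
        have : (m + k) * (N + 1) = (m + k) * N + (m + k) := by ring
        rw [this, Function.iterate_add_apply, hcyc, ih]
    obtain ⟨d, hd⟩ := exists_iterate_root v
    have hle : d ≤ (m + k) * d := Nat.le_mul_of_pos_left d hpos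
    have hroot : v = T.root := by
      rw [← hN d]
      exact iterate_root_of_le hd hle
    subst hroot
    rw [← hk, pf_iterate_root]

lemma pathNodes_root : T.pathNodes T.root = {T.root} := by
  ext u
  constructor
  · intro h
    obtain ⟨k, hk⟩ := mem_pathNodes_iff.1 h
    rw [pf_iterate_root] at hk
    exact hk ▸ rfl
  · rintro rfl
    exact mem_pathNodes_self _

lemma depth_le {u v : T.V} (h : u ∈ T.pathNodes v) : T.depth u ≤ T.depth v := by
  haveI := T.fin
  exact Set.ncard_le_ncard (pathNodes_subset h) (Set.toFinite _)

lemma depth_lt {u v : T.V} (h : u ∈ T.pathNodes v) (hne : u ≠ v) :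
    T.depth u < T.depth v := by
  haveI := T.fin
  refine Set.ncard_lt_ncard ⟨pathNodes_subset h, fun hsub => ?_⟩ (Set.toFinite _)
  exact hne (pathNodes_antisymm h (hsub (mem_pathNodes_self v)))

lemma eq_of_mem_of_depth_le {u v : T.V} (h : u ∈ T.pathNodes v)
    (hd : T.depth v ≤ T.depth u) : u = v := by
  by_contra hne
  exact absurd hd (Nat.not_le.2 (depth_lt h hne))

lemma depth_le_card (v : T.V) : T.depth v ≤ Nat.card T.V := by
  haveI := T.fin
  calc T.depth v ≤ (Set.univ : Set T.V).ncard :=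
        Set.ncard_le_ncard (Set.subset_univ _) (Set.toFinite _)
    _ = Nat.card T.V := Set.ncard_univ _

lemma parent_mem_pathNodes {c u : T.V} (h : T.parent c = some u) : u ∈ T.pathNodes c :=
  ReflTransGen.single h

lemma child_ne {c u : T.V} (h : T.parent c = some u) : c ≠ u := by
  rintro rfl
  have hne : c ≠ T.root := ne_root_of_parent h
  have hpf : T.pf c = c := pf_eq_of_parent h
  have : ∀ k, T.pf^[k] c = c := by
    intro k
    induction k with
    | zero => rfl
    | succ k ih => rw [Function.iterate_succ_apply', ih, hpf]
  obtain ⟨d, hd⟩ := exists_iterate_root c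
  rw [this d] at hd
  exact hne hd

lemma depth_parent_lt {c u : T.V} (h : T.parent c = some u) : T.depth u < T.depth c :=
  depth_lt (parent_mem_pathNodes h) (fun he => child_ne h he.symm)

lemma child_pathNodes {c u : T.V} (h : T.parent c = some u) :
    T.pathNodes c = insert c (T.pathNodes u) := by
  ext w
  constructor
  · intro hw
    rcases (ReflTransGen.cases_head (hw : ReflTransGen _ c w)) with rfl | ⟨b, hb, hbw⟩
    · exact Set.mem_insert _ _
    · have hbu : b = u := by rw [h] at hb; exact (Option.some.inj hb.symm)
      exact Set.mem_insert_of_mem _ (hbu ▸ hbw)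
  · rintro (rfl | hw)
    · exact mem_pathNodes_self _
    · exact ReflTransGen.head h hw

lemma path_chain {a b v : T.V} (ha : a ∈ T.pathNodes v) (hb : b ∈ T.pathNodes v) :
    a ∈ T.pathNodes b ∨ b ∈ T.pathNodes a := by
  obtain ⟨k, hk⟩ := mem_pathNodes_iff.1 ha
  obtain ⟨m, hm⟩ := mem_pathNodes_iff.1 hb
  rcases le_total k m with hkm | hmk
  · refine Or.inr (mem_pathNodes_iff.2 ⟨m - k, ?_⟩)
    rw [← hk, ← Function.iterate_add_apply]
    rw [show m - k + k = m by omega, hm]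
  · refine Or.inl (mem_pathNodes_iff.2 ⟨k - m, ?_⟩)
    rw [← hm, ← Function.iterate_add_apply]
    rw [show k - m + m = k by omega, hk]

lemma child_toward {u w : T.V} (h : u ∈ T.pathNodes w) (hne : u ≠ w) :
    ∃ c, T.parent c = some u ∧ c ∈ T.pathNodes w := by
  classical
  have hex : ∃ k, T.pf^[k] w = u := mem_pathNodes_iff.1 h
  have hk : T.pf^[Nat.find hex] w = u := Nat.find_spec hex
  have hkmin : ∀ k' < Nat.find hex, T.pf^[k'] w ≠ u := fun k' h' => Nat.find_min hex h'
  set k := Nat.find hex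
  have hk0 : k ≠ 0 := by
    intro h0
    rw [h0] at hk
    simp only [Function.iterate_zero_apply] at hk
    exact hne hk.symm
  refine ⟨T.pf^[k - 1] w, ?_, mem_pathNodes_iff.2 ⟨k - 1, rfl⟩⟩
  have hsucc : T.pf (T.pf^[k - 1] w) = u := by
    have h' : T.pf^[k - 1 + 1] w = u := by rw [show k - 1 + 1 = k by omega]; exact hk
    rwa [Function.iterate_succ_apply'] at h'
  have hcr : T.pf^[k - 1] w ≠ T.root := by
    intro hr
    rw [hr, pf_root] at hsucc
    apply hkmin (k - 1) (by omega)
    rw [hr, hsucc]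
  rw [parent_pf hcr, hsucc]

section Region

variable {𝒞 : Set (Set (Fin n → ℝ))}

lemma region_subset_core {v : T.V} : T.region 𝒞 v ⊆ ⋂₀ 𝒞 := by
  rw [region, Set.sInter_union]
  exact Set.inter_subset_left

lemma region_subset_B {u v : T.V} (h : u ∈ T.pathNodes v) : T.region 𝒞 v ⊆ T.B u :=
  fun x hx => hx (T.B u) (Or.inr ⟨u, h, rfl⟩)

lemma region_mono {u v : T.V} (h : u ∈ T.pathNodes v) : T.region 𝒞 v ⊆ T.region 𝒞 u := by
  apply Set.sInter_subset_sInter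
  exact Set.union_subset_union_right _ (Set.image_mono (pathNodes_subset h))

lemma mem_region_root {x : Fin n → ℝ} (hx : x ∈ ⋂₀ 𝒞) : x ∈ T.region 𝒞 T.root := by
  rintro s (hs | ⟨u, hu, rfl⟩)
  · exact hx s hs
  · rw [pathNodes_root] at hu
    rw [Set.mem_singleton_iff] at hu
    rw [hu, T.B_root]
    trivial

lemma region_child {c u : T.V} (h : T.parent c = some u) :
    T.region 𝒞 c = T.region 𝒞 u ∩ T.B c := by
  rw [region, region, pathCons, pathCons, child_pathNodes h, Set.image_insert_eq,
    Set.union_insert, Set.sInter_insert, Set.inter_comm]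

lemma region_chain (hT : T.Consistent 𝒞) {x : Fin n → ℝ} {v w : T.V}
    (hxv : x ∈ T.region 𝒞 v) (hxw : x ∈ T.region 𝒞 w) :
    v ∈ T.pathNodes w ∨ w ∈ T.pathNodes v := by
  classical
  by_contra hcon
  push_neg at hcon
  obtain ⟨hvw, hwv⟩ := hcon
  have hex : ∃ j, ∃ k, T.pf^[k] v = T.pf^[j] w := by
    obtain ⟨dv, hdv⟩ := exists_iterate_root v
    obtain ⟨dw, hdw⟩ := exists_iterate_root w
    exact ⟨dw, dv, by rw [hdv, hdw]⟩
  obtain ⟨j, hjex, hjmin⟩ : ∃ j, (∃ k, T.pf^[k] v = T.pf^[j] w) ∧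
      ∀ j' < j, ¬ ∃ k, T.pf^[k] v = T.pf^[j'] w :=
    ⟨Nat.find hex, Nat.find_spec hex, fun j' h' => Nat.find_min hex h'⟩
  obtain ⟨k, hk, hkmin⟩ : ∃ k, T.pf^[k] v = T.pf^[j] w ∧
      ∀ k' < k, T.pf^[k'] v ≠ T.pf^[j] w :=
    ⟨Nat.find hjex, Nat.find_spec hjex, fun k' h' => Nat.find_min hjex h'⟩
  have hj0 : j ≠ 0 := by
    intro h0
    subst h0
    exact hwv (mem_pathNodes_iff.2 ⟨k, by simpa using hk⟩)
  have hk0 : k ≠ 0 := by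
    intro h0
    subst h0
    simp only [Function.iterate_zero_apply] at hk
    exact hvw (mem_pathNodes_iff.2 ⟨j, hk.symm⟩)
  have hpc1 : T.pf (T.pf^[k - 1] v) = T.pf^[j] w := by
    have h' : T.pf^[k - 1 + 1] v = T.pf^[j] w := by
      rw [show k - 1 + 1 = k by omega]; exact hk
    rwa [Function.iterate_succ_apply'] at h'
  have hpc2 : T.pf (T.pf^[j - 1] w) = T.pf^[j] w := by
    have h' : T.pf^[j - 1 + 1] w = T.pf^[j] w := by
      rw [show j - 1 + 1 = j by omega]
    rwa [Function.iterate_succ_apply'] at h'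
  have hc1root : T.pf^[k - 1] v ≠ T.root := by
    intro hr
    have har : T.pf^[j] w = T.root := by rw [← hpc1, hr, pf_root]
    apply hkmin (k - 1) (by omega)
    rw [hr, har]
  have hc2root : T.pf^[j - 1] w ≠ T.root := by
    intro hr
    have har : T.pf^[j] w = T.root := by rw [← hpc2, hr, pf_root]
    apply hjmin (j - 1) (by omega)
    exact ⟨k, by rw [hk, har, hr]⟩
  have hc12 : T.pf^[k - 1] v ≠ T.pf^[j - 1] w := by
    intro he
    exact hjmin (j - 1) (by omega) ⟨k - 1, he⟩
  have hpar1 : T.parent (T.pf^[k - 1] v) = some (T.pf^[j] w) := by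
    rw [parent_pf hc1root, hpc1]
  have hpar2 : T.parent (T.pf^[j - 1] w) = some (T.pf^[j] w) := by
    rw [parent_pf hc2root, hpc2]
  have hxc1 : x ∈ T.B (T.pf^[k - 1] v) :=
    region_subset_B (mem_pathNodes_iff.2 ⟨k - 1, rfl⟩) hxv
  have hxc2 : x ∈ T.B (T.pf^[j - 1] w) :=
    region_subset_B (mem_pathNodes_iff.2 ⟨j - 1, rfl⟩) hxw
  have hdisj := hT.2.2.2 (T.pf^[j] w) _ _ hpar1 hpar2 hc12
  have hmem : sigApply (T.sig (T.pf^[j] w)) x ∈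
      sigApply (T.sig (T.pf^[j] w)) '' T.B (T.pf^[k - 1] v) ∩
      sigApply (T.sig (T.pf^[j] w)) '' T.B (T.pf^[j - 1] w) :=
    ⟨⟨x, hxc1, rfl⟩, ⟨x, hxc2, rfl⟩⟩
  rw [hdisj] at hmem
  exact hmem

lemma sig_ne_of_sep (hT : T.Consistent 𝒞) {c u : T.V} (hc : T.parent c = some u)
    {x y : Fin n → ℝ} (hx : x ∈ ⋂₀ 𝒞) (hxc : x ∉ T.B c) (hy : y ∈ T.B c) :
    sigApply (T.sig u) x ≠ sigApply (T.sig u) y := by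
  intro heq
  have hcover := hT.1 u ⟨c, hc⟩ hx
  rw [Set.mem_iUnion₂] at hcover
  obtain ⟨c', hc', hxc'⟩ := hcover
  have hne : c' ≠ c := fun he => hxc (he ▸ hxc')
  have hdisj := hT.2.2.2 u c' c hc' hc hne
  have : sigApply (T.sig u) x ∈
      sigApply (T.sig u) '' T.B c' ∩ sigApply (T.sig u) '' T.B c :=
    ⟨⟨x, hxc', rfl⟩, ⟨y, hy, heq.symm⟩⟩
  rw [hdisj] at this
  exact this

lemma sig_prefix (hT : T.Consistent 𝒞) {u v : T.V} (h : u ∈ T.pathNodes v) :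
    T.sig u <+: T.sig v := by
  induction h with
  | refl => exact List.prefix_refl _
  | tail h1 h2 ih => exact (hT.2.1 _ _ h2).trans ih

end Region

end BranchingTree

end TreeAux


section DCNAux

namespace BranchingTree

variable {n : ℕ} {T : BranchingTree n} {𝒞 : Set (Set (Fin n → ℝ))} {ε : ℝ}

lemma sigApply_append (σ τ : List (Fin n × Bool)) (x : Fin n → ℝ) :
    sigApply (σ ++ τ) x = sigApply σ x ++ sigApply τ x := List.map_append

lemma length_sigApply (σ : List (Fin n × Bool)) (x : Fin n → ℝ) :
    (sigApply σ x).length = σ.length := List.length_map _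

lemma lexGt_sig_extend {σ σ' : List (Fin n × Bool)} (hpre : σ <+: σ') {x y : Fin n → ℝ}
    (h : lexGt ε (sigApply σ x) (sigApply σ y)) :
    lexGt ε (sigApply σ' x) (sigApply σ' y) := by
  obtain ⟨r, rfl⟩ := hpre
  rw [sigApply_append, sigApply_append]
  exact lexGt_append h _ _

lemma sig_restrict_or {σ σ' : List (Fin n × Bool)} (hpre : σ <+: σ') {x y : Fin n → ℝ}
    (h : sigApply σ' x = sigApply σ' y ∨ lexGt ε (sigApply σ' x) (sigApply σ' y)) :
    sigApply σ x = sigApply σ y ∨ lexGt ε (sigApply σ x) (sigApply σ y) := by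
  obtain ⟨r, rfl⟩ := hpre
  rw [sigApply_append, sigApply_append] at h
  rcases h with h | h
  · exact Or.inl (List.append_inj h (by rw [length_sigApply, length_sigApply])).1
  · exact lexGt_restrict (by rw [length_sigApply, length_sigApply]) h

lemma dcn_exists {x y : Fin n → ℝ} (hx : x ∈ ⋂₀ 𝒞) (hy : y ∈ ⋂₀ 𝒞) :
    ∃ v, T.IsDCN 𝒞 v x y := by
  haveI := T.fin
  have hne : {v : T.V | x ∈ T.region 𝒞 v ∧ y ∈ T.region 𝒞 v}.Nonempty :=
    ⟨T.root, mem_region_root hx, mem_region_root hy⟩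
  obtain ⟨v, hv, hmax⟩ := Set.Finite.exists_maximalFor T.depth _ (Set.toFinite _) hne
  refine ⟨v, hv.1, hv.2, fun w hwx hwy => ?_⟩
  rcases le_total (T.depth w) (T.depth v) with h | h
  · exact h
  · exact hmax ⟨hwx, hwy⟩ h

lemma dcn_anc (hT : T.Consistent 𝒞) {x y : Fin n → ℝ} {v w : T.V}
    (hw : T.IsDCN 𝒞 w x y) (hxv : x ∈ T.region 𝒞 v) (hyv : y ∈ T.region 𝒞 v) :
    v ∈ T.pathNodes w := by
  rcases region_chain hT hxv hw.1 with h | h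
  · exact h
  · have hd := hw.2.2 v hxv hyv
    have hwv : w = v := eq_of_mem_of_depth_le h hd
    rw [← hwv]
    exact mem_pathNodes_self _

lemma comp_main (hT : T.Consistent 𝒞) (hε : 0 < ε) {x y z : Fin n → ℝ} {u v : T.V}
    (hu : T.IsDCN 𝒞 u y x)
    (hRyx : sigApply (T.sig u) y = sigApply (T.sig u) x ∨
      lexGt ε (sigApply (T.sig u) y) (sigApply (T.sig u) x))
    (hv : T.IsDCN 𝒞 v z y)
    (hRzy : sigApply (T.sig v) z = sigApply (T.sig v) y ∨
      lexGt ε (sigApply (T.sig v) z) (sigApply (T.sig v) y)) :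
    ∃ w, T.IsDCN 𝒞 w z x ∧
      (sigApply (T.sig w) z = sigApply (T.sig w) x ∨
        lexGt ε (sigApply (T.sig w) z) (sigApply (T.sig w) x)) ∧
      ((lexGt ε (sigApply (T.sig u) y) (sigApply (T.sig u) x) ∨
        lexGt ε (sigApply (T.sig v) z) (sigApply (T.sig v) y)) →
        lexGt ε (sigApply (T.sig w) z) (sigApply (T.sig w) x)) := by
  have hyu : y ∈ T.region 𝒞 u := hu.1
  have hxu : x ∈ T.region 𝒞 u := hu.2.1
  have hzv : z ∈ T.region 𝒞 v := hv.1
  have hyv : y ∈ T.region 𝒞 v := hv.2.1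
  have hxC : x ∈ ⋂₀ 𝒞 := region_subset_core hxu
  have hyC : y ∈ ⋂₀ 𝒞 := region_subset_core hyu
  have hzC : z ∈ ⋂₀ 𝒞 := region_subset_core hzv
  by_cases huv : u = v
  · subst huv
    obtain ⟨w, hw⟩ := dcn_exists (T := T) (𝒞 := 𝒞) hzC hxC
    have huw : u ∈ T.pathNodes w := dcn_anc hT hw hzv hxu
    by_cases hwu : w = u
    · subst hwu
      refine ⟨w, hw, ?_, ?_⟩
      · rcases hRzy with h1 | h1 <;> rcases hRyx with h2 | h2
        · exact Or.inl (h1.trans h2)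
        · exact Or.inr (h1 ▸ h2)
        · exact Or.inr (h2 ▸ h1)
        · exact Or.inr (lexGt_trans hε h1 h2)
      · intro hst
        rcases hRzy with h1 | h1 <;> rcases hRyx with h2 | h2
        · rcases hst with hs | hs
          · rw [h2] at hs
            exact absurd hs (lexGt_irrefl ε _)
          · rw [h1] at hs
            exact absurd hs (lexGt_irrefl ε _)
        · exact h1 ▸ h2
        · exact h2 ▸ h1
        · exact lexGt_trans hε h1 h2
    · obtain ⟨c, hcpar, hcw⟩ := child_toward huw (fun he => hwu he.symm)
      have hxc : x ∈ T.B c := region_subset_B hcw hw.2.1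
      have hzc : z ∈ T.B c := region_subset_B hcw hw.1
      have hyc : y ∉ T.B c := by
        intro hyBc
        have hyrc : y ∈ T.region 𝒞 c := by rw [region_child hcpar]; exact ⟨hyu, hyBc⟩
        have hxrc : x ∈ T.region 𝒞 c := by rw [region_child hcpar]; exact ⟨hxu, hxc⟩
        exact absurd (hu.2.2 c hyrc hxrc) (Nat.not_le.2 (depth_parent_lt hcpar))
      have hne1 : sigApply (T.sig u) y ≠ sigApply (T.sig u) x :=
        sig_ne_of_sep hT hcpar hyC hyc hxc
      have hne2 : sigApply (T.sig u) y ≠ sigApply (T.sig u) z :=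
        sig_ne_of_sep hT hcpar hyC hyc hzc
      have h1 : lexGt ε (sigApply (T.sig u) z) (sigApply (T.sig u) y) :=
        hRzy.resolve_left (fun he => hne2 he.symm)
      have h2 : lexGt ε (sigApply (T.sig u) y) (sigApply (T.sig u) x) :=
        hRyx.resolve_left hne1
      have h3 := lexGt_trans hε h1 h2
      have hpre : T.sig u <+: T.sig w := sig_prefix hT huw
      exact ⟨w, hw, Or.inr (lexGt_sig_extend hpre h3), fun _ => lexGt_sig_extend hpre h3⟩
  · rcases region_chain hT hyu hyv with huv' | hvu'
    · -- u is a strict ancestor of v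
      have hzu : z ∈ T.region 𝒞 u := region_mono huv' hzv
      obtain ⟨c, hcpar, hcv⟩ := child_toward huv' huv
      have hyc : y ∈ T.B c := region_subset_B hcv hyv
      have hxc : x ∉ T.B c := by
        intro hxBc
        have hxrc : x ∈ T.region 𝒞 c := by rw [region_child hcpar]; exact ⟨hxu, hxBc⟩
        have hyrc : y ∈ T.region 𝒞 c := by rw [region_child hcpar]; exact ⟨hyu, hyc⟩
        exact absurd (hu.2.2 c hyrc hxrc) (Nat.not_le.2 (depth_parent_lt hcpar))
      have hdcn : T.IsDCN 𝒞 u z x := by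
        refine ⟨hzu, hxu, fun w' hzw' hxw' => ?_⟩
        rcases region_chain hT hxw' hxu with h | h
        · exact depth_le h
        · rcases region_chain hT hzw' hzv with h2 | h2
          · rcases path_chain hcv h2 with h3 | h3
            · exact absurd (region_subset_B h3 hxw') hxc
            · rw [child_pathNodes hcpar, Set.mem_insert_iff] at h3
              rcases h3 with he | h3
              · exact absurd (region_subset_B (mem_pathNodes_self c) (he ▸ hxw')) hxc
              · exact depth_le h3
          · have hxv' : x ∈ T.region 𝒞 v := region_mono h2 hxw'
            have hd1 := hu.2.2 v hyv hxv'
            have hd2 := depth_lt huv' huv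
            omega
      have h2 : lexGt ε (sigApply (T.sig u) y) (sigApply (T.sig u) x) :=
        hRyx.resolve_left (Ne.symm (sig_ne_of_sep hT hcpar hxC hxc hyc))
      have hpre : T.sig u <+: T.sig v := sig_prefix hT huv'
      have hRzy' := sig_restrict_or hpre hRzy
      have h3 : lexGt ε (sigApply (T.sig u) z) (sigApply (T.sig u) x) := by
        rcases hRzy' with he | hl
        · rw [he]; exact h2
        · exact lexGt_trans hε hl h2
      exact ⟨u, hdcn, Or.inr h3, fun _ => h3⟩
    · -- v is a strict ancestor of u
      have hvu : v ≠ u := fun he => huv he.symm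
      have hxv : x ∈ T.region 𝒞 v := region_mono hvu' hxu
      obtain ⟨c, hcpar, hcu⟩ := child_toward hvu' hvu
      have hyc : y ∈ T.B c := region_subset_B hcu hyu
      have hzc : z ∉ T.B c := by
        intro hzBc
        have hzrc : z ∈ T.region 𝒞 c := by rw [region_child hcpar]; exact ⟨hzv, hzBc⟩
        have hyrc : y ∈ T.region 𝒞 c := by rw [region_child hcpar]; exact ⟨hyv, hyc⟩
        exact absurd (hv.2.2 c hzrc hyrc) (Nat.not_le.2 (depth_parent_lt hcpar))
      have hdcn : T.IsDCN 𝒞 v z x := by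
        refine ⟨hzv, hxv, fun w' hzw' hxw' => ?_⟩
        rcases region_chain hT hzw' hzv with h | h
        · exact depth_le h
        · rcases region_chain hT hxw' hxu with h2 | h2
          · rcases path_chain hcu h2 with h3 | h3
            · exact absurd (region_subset_B h3 hzw') hzc
            · rw [child_pathNodes hcpar, Set.mem_insert_iff] at h3
              rcases h3 with he | h3
              · exact absurd (region_subset_B (mem_pathNodes_self c) (he ▸ hzw')) hzc
              · exact depth_le h3
          · have hzu' : z ∈ T.region 𝒞 u := region_mono h2 hzw'
            have hd1 := hv.2.2 u hzu' hyu
            have hd2 := depth_lt hvu' hvu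
            omega
      have h1 : lexGt ε (sigApply (T.sig v) z) (sigApply (T.sig v) y) :=
        hRzy.resolve_left (sig_ne_of_sep hT hcpar hzC hzc hyc)
      have hpre : T.sig v <+: T.sig u := sig_prefix hT hvu'
      have hRyx' := sig_restrict_or hpre hRyx
      have h3 : lexGt ε (sigApply (T.sig v) z) (sigApply (T.sig v) x) := by
        rcases hRyx' with he | hl
        · exact he ▸ h1
        · exact lexGt_trans hε h1 hl
      exact ⟨v, hdcn, Or.inr h3, fun _ => h3⟩

lemma treeGe_trans (hT : T.Consistent 𝒞) (hε : 0 < ε) {x y z : Fin n → ℝ}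
    (hzy : T.TreeGe 𝒞 ε z y) (hyx : T.TreeGe 𝒞 ε y x) : T.TreeGe 𝒞 ε z x := by
  obtain ⟨v, hv, hRzy⟩ := hzy
  obtain ⟨u, hu, hRyx⟩ := hyx
  obtain ⟨w, hw, hR, _⟩ := comp_main hT hε hu hRyx hv hRzy
  exact ⟨w, hw, hR⟩

lemma treeGt_of_gt_ge (hT : T.Consistent 𝒞) (hε : 0 < ε) {x y z : Fin n → ℝ}
    (hzy : T.TreeGt 𝒞 ε z y) (hyx : T.TreeGe 𝒞 ε y x) : T.TreeGt 𝒞 ε z x := by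
  obtain ⟨v, hv, hRzy⟩ := hzy
  obtain ⟨u, hu, hRyx⟩ := hyx
  obtain ⟨w, hw, _, hst⟩ := comp_main hT hε hu hRyx hv (Or.inr hRzy)
  exact ⟨w, hw, hst (Or.inr hRzy)⟩

lemma treeGt_of_ge_gt (hT : T.Consistent 𝒞) (hε : 0 < ε) {x y z : Fin n → ℝ}
    (hzy : T.TreeGe 𝒞 ε z y) (hyx : T.TreeGt 𝒞 ε y x) : T.TreeGt 𝒞 ε z x := by
  obtain ⟨v, hv, hRzy⟩ := hzy
  obtain ⟨u, hu, hRyx⟩ := hyx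
  obtain ⟨w, hw, _, hst⟩ := comp_main hT hε hu (Or.inr hRyx) hv hRzy
  exact ⟨w, hw, hst (Or.inl hRyx)⟩

lemma treeGt_trans (hT : T.Consistent 𝒞) (hε : 0 < ε) {x y z : Fin n → ℝ}
    (hzy : T.TreeGt 𝒞 ε z y) (hyx : T.TreeGt 𝒞 ε y x) : T.TreeGt 𝒞 ε z x :=
  treeGt_of_gt_ge hT hε hzy ⟨hyx.choose, hyx.choose_spec.1, Or.inr hyx.choose_spec.2⟩

lemma TreeGt.toGe {x y : Fin n → ℝ} (h : T.TreeGt 𝒞 ε x y) : T.TreeGe 𝒞 ε x y :=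
  ⟨h.choose, h.choose_spec.1, Or.inr h.choose_spec.2⟩

end BranchingTree

end DCNAux


section NoChain

namespace BranchingTree

variable {n : ℕ} {T : BranchingTree n} {𝒞 : Set (Set (Fin n → ℝ))} {ε : ℝ}

lemma no_chain_aux (hT : T.Consistent 𝒞) (hε : 0 < ε) :
    ∀ (m : ℕ) (v : T.V), Nat.card T.V + 1 - T.depth v ≤ m →
      ∀ seq : ℕ → (Fin n → ℝ), (∀ i, seq i ∈ T.region 𝒞 v) →
        (∀ i j, i < j → T.TreeGt 𝒞 ε (seq j) (seq i)) → False := by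
  intro m
  induction m with
  | zero =>
    intro v hv seq _ _
    have := depth_le_card v
    omega
  | succ m ih =>
    intro v hv seq hreg hpair
    classical
    have pairwiseV : ∀ i j, i < j →
        sigApply (T.sig v) (seq j) = sigApply (T.sig v) (seq i) ∨
          lexGt ε (sigApply (T.sig v) (seq j)) (sigApply (T.sig v) (seq i)) := by
      intro i j hij
      obtain ⟨w, hw, hlex⟩ := hpair i j hij
      have hvw : v ∈ T.pathNodes w := dcn_anc hT hw (hreg j) (hreg i)
      exact sig_restrict_or (sig_prefix hT hvw) (Or.inr hlex)
    by_cases hconst : ∃ i₀, ∀ j, i₀ ≤ j →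
        sigApply (T.sig v) (seq j) = sigApply (T.sig v) (seq i₀)
    · obtain ⟨i₀, hi₀⟩ := hconst
      have H : ∀ k : ℕ, ∃ w, T.IsDCN 𝒞 w (seq (i₀ + k + 1)) (seq i₀) ∧
          lexGt ε (sigApply (T.sig w) (seq (i₀ + k + 1))) (sigApply (T.sig w) (seq i₀)) :=
        fun k => hpair i₀ (i₀ + k + 1) (by omega)
      choose W hW1 hW2 using H
      have hWdeep : ∀ k, T.depth v < T.depth (W k) := by
        intro k
        have hvw : v ∈ T.pathNodes (W k) := dcn_anc hT (hW1 k) (hreg _) (hreg _)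
        have hne : v ≠ W k := by
          intro he
          have hl := hW2 k
          rw [← he] at hl
          rw [hi₀ (i₀ + k + 1) (by omega), hi₀ i₀ le_rfl] at hl
          exact lexGt_irrefl ε _ hl
        exact depth_lt hvw hne
      haveI := T.fin
      haveI : Finite T.V := Finite.of_fintype _
      obtain ⟨v', hv'⟩ := Finite.exists_infinite_fiber W
      have hSinf : {k : ℕ | W k = v'}.Infinite := Set.infinite_coe_iff.1 hv'
      set p : ℕ → Prop := fun k => W k = v' with hp
      have hnth : ∀ m', W (Nat.nth p m') = v' := fun m' => Nat.nth_mem_of_infinite hSinf m'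
      have hdeepv' : T.depth v < T.depth v' := by
        have := hWdeep (Nat.nth p 0)
        rwa [hnth 0] at this
      have hcard := depth_le_card (T := T) v'
      apply ih v' (by omega) (fun m' => seq (i₀ + Nat.nth p m' + 1)) ?_ ?_
      · intro m'
        have := (hW1 (Nat.nth p m')).1
        rwa [hnth m'] at this
      · intro a b hab
        exact hpair _ _ (by have := (Nat.nth_lt_nth hSinf).2 hab; omega)
    · push_neg at hconst
      have step : ∀ i, ∃ j, i < j ∧
          lexGt ε (sigApply (T.sig v) (seq j)) (sigApply (T.sig v) (seq i)) := by
        intro i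
        obtain ⟨j, hij, hne⟩ := hconst i
        rcases Nat.eq_or_lt_of_le hij with rfl | hlt
        · exact absurd rfl hne
        · rcases pairwiseV i j hlt with he | hl
          · exact absurd he hne
          · exact ⟨j, hlt, hl⟩
      choose nxt hnxt1 hnxt2 using step
      have hchain : ∀ k, lexGt ε (sigApply (T.sig v) (seq (nxt^[k + 1] 0)))
          (sigApply (T.sig v) (seq (nxt^[k] 0))) := by
        intro k
        rw [Function.iterate_succ_apply']
        exact hnxt2 _
      have hM : ∀ i : Fin (T.sig v).length, ∃ b, ∀ xx ∈ ⋂₀ 𝒞,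
          (if ((T.sig v).get i).2 then xx ((T.sig v).get i).1
            else -(xx ((T.sig v).get i).1)) ≤ b := by
        intro i
        obtain ⟨b, hb⟩ := hT.2.2.1 v i
        exact ⟨b, fun xx hxx => hb ⟨xx, hxx, rfl⟩⟩
      choose Mb hMb using hM
      apply lexGt_bounded_chain hε (List.ofFn Mb)
        (fun k => sigApply (T.sig v) (seq (nxt^[k] 0))) ?_ hchain
      intro k
      rw [List.forall₂_iff_get]
      refine ⟨by rw [length_sigApply, List.length_ofFn], ?_⟩
      intro i h₁ h₂
      rw [List.get_ofFn]
      have hget : (sigApply (T.sig v) (seq (nxt^[k] 0))).get ⟨i, h₁⟩ =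
          (if ((T.sig v).get ⟨i, by rwa [length_sigApply] at h₁⟩).2
            then (seq (nxt^[k] 0)) ((T.sig v).get ⟨i, by rwa [length_sigApply] at h₁⟩).1
            else -((seq (nxt^[k] 0)) ((T.sig v).get ⟨i, by rwa [length_sigApply] at h₁⟩).1)) :=
        by simp [sigApply]
      rw [hget]
      exact hMb _ _ (region_subset_core (hreg _))

lemma no_infinite_chain (hT : T.Consistent 𝒞) (hε : 0 < ε)
    (seq : ℕ → (Fin n → ℝ)) (hmem : ∀ i, seq i ∈ ⋂₀ 𝒞)
    (hpair : ∀ i j, i < j → T.TreeGt 𝒞 ε (seq j) (seq i)) : False :=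
  no_chain_aux hT hε (Nat.card T.V + 1 - T.depth T.root) T.root le_rfl seq
    (fun i => mem_region_root (hmem i)) hpair

end BranchingTree

end NoChain

/-- dominance-based strengthening rule: if
`(𝒞, 𝒟, g, z, T, ε)` is `(F, f)`-valid and there is a witness `ω : ℝⁿ → ℝⁿ`
such that every `x ∈ ⋂(𝒞 ∪ 𝒟)` with `x ∉ C` satisfies `ω x ∈ ⋂𝒞`,
`ω x ≻_{ε,T} x`, and `g (ω x) ≤ g x`, then `(𝒞, 𝒟 ∪ {C}, g, z, T, ε)` is also
`(F, f)`-valid. -/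
theorem dominance_strengthening {n : ℕ} (F : Set (Fin n → ℝ))
    (f : (Fin n → ℝ) → ℝ) (K : Config n) (hV : K.Valid F f)
    (C : Set (Fin n → ℝ)) (ω : (Fin n → ℝ) → (Fin n → ℝ))
    (hω : ∀ x : Fin n → ℝ, x ∈ ⋂₀ (K.core ∪ K.derived) → x ∉ C →
      ω x ∈ ⋂₀ K.core ∧
      K.tree.TreeGt K.core K.eps (ω x) x ∧ K.g (ω x) ≤ K.g x) :
    Config.Valid F f
      { core := K.core, derived := insert C K.derived, g := K.g, z := K.z,
        tree := K.tree, eps := K.eps } := by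
  obtain ⟨⟨hcons, heps⟩, hV2, hV3, hV4⟩ := hV
  refine ⟨⟨hcons, heps⟩, hV2, hV3, ?_⟩
  intro x hx hgx
  by_contra hcon
  push_neg at hcon
  -- The invariant maintained along the sequence
  set P : (Fin n → ℝ) → Prop := fun y =>
    y ∈ ⋂₀ (K.core ∪ K.derived) ∧ K.tree.TreeGe K.core K.eps y x ∧ K.g y ≤ K.g x with hP
  have hstep : ∀ y, P y → ∃ y', P y' ∧ K.tree.TreeGt K.core K.eps y' y := by
    intro y hy
    obtain ⟨hy1, hy2, hy3⟩ := hy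
    have hyC : y ∉ C := by
      intro hyC
      have hymem : y ∈ ⋂₀ (K.core ∪ insert C K.derived) := by
        intro s hs
        rcases hs with hs | hs
        · exact hy1 s (Or.inl hs)
        · rcases Set.mem_insert_iff.1 hs with rfl | hs
          · exact hyC
          · exact hy1 s (Or.inr hs)
      exact absurd hy3 (not_le.2 (hcon y hymem hy2))
    obtain ⟨hω1, hω2, hω3⟩ := hω y hy1 hyC
    have hgle : K.g (ω y) ≤ K.g x := le_trans hω3 hy3
    have hgltz : (K.g (ω y) : WithTop ℝ) < K.z :=
      lt_of_le_of_lt (WithTop.coe_le_coe.2 hgle) hgx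
    obtain ⟨y', hy'mem, hy'ge, hy'g⟩ := hV4 (ω y) hω1 hgltz
    have hgt : K.tree.TreeGt K.core K.eps y' y :=
      BranchingTree.treeGt_of_ge_gt hcons heps hy'ge hω2
    exact ⟨y', ⟨hy'mem,
      BranchingTree.treeGe_trans hcons heps hgt.toGe hy2,
      le_trans hy'g hgle⟩, hgt⟩
  obtain ⟨y₀, hy₀mem, hy₀ge, hy₀g⟩ := hV4 x hx hgx
  have hP0 : P y₀ := ⟨hy₀mem, hy₀ge, hy₀g⟩
  choose! fnext hf1 hf2 using hstep
  have hPseq : ∀ i, P (fnext^[i] y₀) := by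
    intro i
    induction i with
    | zero => exact hP0
    | succ i ih =>
      rw [Function.iterate_succ_apply']
      exact hf1 _ ih
  have hstep' : ∀ i, K.tree.TreeGt K.core K.eps (fnext^[i + 1] y₀) (fnext^[i] y₀) := by
    intro i
    rw [Function.iterate_succ_apply']
    exact hf2 _ (hPseq i)
  have hpair : ∀ i j, i < j →
      K.tree.TreeGt K.core K.eps (fnext^[j] y₀) (fnext^[i] y₀) := by
    intro i j hij
    induction hij with
    | refl => exact hstep' i
    | step h ihs => exact BranchingTree.treeGt_trans hcons heps (hstep' _) ihs
  exact BranchingTree.no_infinite_chain hcons heps (fun i => fnext^[i] y₀)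
    (fun i => fun s hs => (hPseq i).1 s (Or.inl hs)) hpair
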